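/- Let B satisfy the three border conditions and let O = { t : t ∉ B and ∃ t' ∈ B with t | t' }. Then ∂O ⊆ B. -/

import Mathlib

namespace BBD

open Finsupp

variable {σ : Type*}

/-- `t'` is a child of `t`: `t' · y = t` for some variable `y`. -/
def isChild (t' t : σ →₀ ℕ) : Prop := ∃ y : σ, t' + Finsupp.single y 1 = t

/-- The set of children of a monomial `t`. -/
def children (t : σ →₀ ℕ) : Set (σ →₀ ℕ) := {t' | isChild t' t}

/-- The children of a set of monomials. -/
def childrenSet (S : Set (σ →₀ ℕ)) : Set (σ →₀ ℕ) := ⋃ s ∈ S, children s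

/-- The set of parents of a monomial `t`. -/
def parents (t : σ →₀ ℕ) : Set (σ →₀ ℕ) := {t' | isChild t t'}

/-- An order ideal: a nonempty finite set of monomials closed under divisibility. -/
def IsOrderIdeal (O : Set (σ →₀ ℕ)) : Prop :=
  O.Finite ∧ O.Nonempty ∧ ∀ t ∈ O, ∀ t', t' ≤ t → t' ∈ O

/-- The border of a set of monomials: `(T₁ · O) \ O`. -/
def borderOf (O : Set (σ →₀ ℕ)) : Set (σ →₀ ℕ) :=
  {t | t ∉ O ∧ ∃ t' ∈ O, ∃ y : σ, t = t' + Finsupp.single y 1}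


theorem border_subset_B [Fintype σ] (B : Set (σ →₀ ℕ)) (hfin : B.Finite) (hne : B.Nonempty)
    (h1 : ∀ t ∈ B, ∀ x y : σ, Finsupp.single x 1 ≤ t → y ≠ x →
      (t + Finsupp.single y 1 ∈ B ∨ t + Finsupp.single y 1 - Finsupp.single x 1 ∈ B ∨
        t - Finsupp.single x 1 ∈ B))
    (h2 : ∀ t ∈ B, ∃ x : σ, Finsupp.single x 1 ≤ t ∧ t - Finsupp.single x 1 ∉ B)
    (h3 : ∀ t ∈ B, ∀ t1 t2 : σ →₀ ℕ, t1 ∈ B → t1 ≤ t2 → t2 ≤ t → t2 ∈ B) :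
    borderOf {t : σ →₀ ℕ | t ∉ B ∧ ∃ t' ∈ B, t ≤ t'} ⊆ B := by
  classical
  intro t ht
  obtain ⟨htO, t', ⟨ht'B, s0, hs0B, ht's0⟩, y, rfl⟩ := ht
  by_contra htB
  have hnodiv : ∀ s ∈ B, ¬ (t' + Finsupp.single y 1 ≤ s) := by
    intro s hs hle
    exact htO ⟨htB, s, hs, hle⟩
  -- take a minimal element of B divisible by t'
  obtain ⟨s, ⟨hsB, ht's⟩, hmin⟩ :=
    Set.Finite.exists_minimalFor id {u | u ∈ B ∧ t' ≤ u}
      (hfin.subset (fun u hu => hu.1)) ⟨s0, hs0B, ht's0⟩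
  have hts : t' ≠ s := fun h => ht'B (h ▸ hsB)
  -- find a coordinate where t' is strictly smaller
  obtain ⟨x, hx⟩ : ∃ x, t' x < s x := by
    by_contra hc
    push_neg at hc
    exact hts (le_antisymm ht's (Finsupp.le_def.2 hc))
  have hxs : Finsupp.single x 1 ≤ s := by
    rw [Finsupp.le_def]
    intro a
    rcases eq_or_ne a x with rfl | hax
    · rw [Finsupp.single_eq_same]
      omega
    · simp [Finsupp.single_apply, hax.symm]
  have ht'c : t' ≤ s - Finsupp.single x 1 := by
    rw [Finsupp.le_def]
    intro a
    rw [Finsupp.tsub_apply]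
    rcases eq_or_ne a x with rfl | hax
    · rw [Finsupp.single_eq_same]
      omega
    · have := Finsupp.le_def.1 ht's a
      simp [Finsupp.single_apply, hax.symm]
      omega
  have hadd : s - Finsupp.single x 1 + Finsupp.single x 1 = s := tsub_add_cancel_of_le hxs
  have hcB : s - Finsupp.single x 1 ∉ B := by
    intro hc
    have hcs : s - Finsupp.single x 1 < s := by
      refine lt_of_le_of_ne tsub_le_self (fun h => ?_)
      have h2 := DFunLike.congr_fun h x
      rw [Finsupp.tsub_apply] at h2
      rw [Finsupp.single_eq_same] at h2
      omega
    exact lt_irrefl _ (lt_of_lt_of_le hcs (hmin ⟨hc, ht'c⟩ hcs.le))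
  rcases eq_or_ne y x with rfl | hyx
  · exact hnodiv s hsB (hadd ▸ add_le_add_left ht'c _)
  · rcases h1 s hsB x y hxs hyx with h | h | h
    · exact hnodiv _ h (add_le_add_left ht's _)
    · refine hnodiv _ h ?_
      rw [← tsub_add_eq_add_tsub hxs]
      exact add_le_add_left ht'c _
    · exact hcB h

end BBD
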